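/- In the Δ^p_2-hardness construction, let φ be a satisfiable propositional formula over x_1,…,x_n and let (M'',w'') = (M,w0) ⊗ (E_1,e_1) ⊗ … ⊗ (E_n,e_n) ⊗ (E'_1,e'_1) ⊗ … ⊗ (E'_n,e'_n). Then w'' makes z true and all of x_1,…,x_n false, and every world of M'' that makes z false agrees on x_1,…,x_n with the lexicographically maximal truth assignment satisfying φ. -/

import Mathlib

namespace DELMC

inductive DForm (Agent : Type) : Type
  | atom : ℕ → DForm Agent
  | neg : DForm Agent → DForm Agent
  | and : DForm Agent → DForm Agent → DForm Agent
  | K : Agent → DForm Agent → DForm Agent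
  | upd : (k : ℕ) → (Agent → Fin (k+1) → Fin (k+1) → Bool) →
      (Fin (k+1) → DForm Agent) → (Fin (k+1) → List (ℕ × Bool)) →
      (Fin (k+1) → Bool) → DForm Agent → DForm Agent

structure EpiModel (Agent : Type) where
  World : Type
  rel : Agent → World → World → Prop
  val : World → ℕ → Prop

def postEval (l : List (ℕ × Bool)) (p : ℕ) : Option Bool :=
  (l.find? (fun q => q.1 == p)).map Prod.snd

def updModel {Agent : Type} (M : EpiModel Agent) (k : ℕ)
    (S : Agent → Fin (k+1) → Fin (k+1) → Bool)
    (dom : M.World → Fin (k+1) → Prop)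
    (post : Fin (k+1) → List (ℕ × Bool)) : EpiModel Agent where
  World := { p : M.World × Fin (k+1) // dom p.1 p.2 }
  rel a u v := M.rel a u.1.1 v.1.1 ∧ S a u.1.2 v.1.2 = true
  val u p :=
    match postEval (post u.1.2) p with
    | some b => b = true
    | none => M.val u.1.1 p

def Sat {Agent : Type} : (M : EpiModel Agent) → M.World → DForm Agent → Prop
  | M, w, .atom p => M.val w p
  | M, w, .neg φ => ¬ Sat M w φ
  | M, w, .and φ ψ => Sat M w φ ∧ Sat M w ψ
  | M, w, .K a φ => ∀ v, M.rel a w v → Sat M v φ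
  | M, w, .upd k S pre post des φ =>
      ∀ e, des e = true → ∀ h : Sat M w (pre e),
        Sat (updModel M k S (fun v e' => Sat M v (pre e')) post) ⟨(w, e), h⟩ φ

/-- `K̂_a φ := ¬ K_a ¬ φ`. -/
def khat {Agent : Type} (a : Agent) (φ : DForm Agent) : DForm Agent := .neg (.K a (.neg φ))

/-- The formula `⊤` (as the abbreviation `¬(p ∧ ¬p)`). -/
def dtop {Agent : Type} : DForm Agent := .neg (.and (.atom 0) (.neg (.atom 0)))

/-- Implication `φ → ψ`, as the abbreviation `¬(φ ∧ ¬ψ)`. -/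
def dimp {Agent : Type} (φ ψ : DForm Agent) : DForm Agent := .neg (.and φ (.neg ψ))

/-- Conjunction of a list of formulas. -/
def bigAnd {Agent : Type} : List (DForm Agent) → DForm Agent
  | [] => dtop
  | [φ] => φ
  | φ :: rest => .and φ (bigAnd rest)

/-- An epistemic model is S5 if all relations are equivalence relations. -/
def EpiModel.IsS5 {Agent : Type} (M : EpiModel Agent) : Prop := ∀ a, Equivalence (M.rel a)

/-- A list of literals contains no complementary pair. -/
def NoComplPair (l : List (ℕ × Bool)) : Prop := ∀ p : ℕ, ¬ ((p, true) ∈ l ∧ (p, false) ∈ l)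

/-- All update modalities in the formula use S5 event models (with no constraint on
designated events or postconditions beyond non-complementarity). -/
def DForm.updsS5 {Agent : Type} : DForm Agent → Prop
  | .atom _ => True
  | .neg φ => φ.updsS5
  | .and φ ψ => φ.updsS5 ∧ ψ.updsS5
  | .K _ φ => φ.updsS5
  | .upd _ S pre post _ φ =>
      (∀ a, Equivalence (fun i j => S a i j = true)) ∧
      (∀ e, NoComplPair (post e)) ∧ (∀ e, (pre e).updsS5) ∧ φ.updsS5

/-- All update modalities are single-pointed (exactly one designated event). -/
def DForm.updsSingle {Agent : Type} : DForm Agent → Prop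
  | .atom _ => True
  | .neg φ => φ.updsSingle
  | .and φ ψ => φ.updsSingle ∧ ψ.updsSingle
  | .K _ φ => φ.updsSingle
  | .upd _ _ pre _ des φ =>
      (∃! e, des e = true) ∧ (∀ e, (pre e).updsSingle) ∧ φ.updsSingle

/-- All update modalities have empty postconditions. -/
def DForm.updsNoPost {Agent : Type} : DForm Agent → Prop
  | .atom _ => True
  | .neg φ => φ.updsNoPost
  | .and φ ψ => φ.updsNoPost ∧ ψ.updsNoPost
  | .K _ φ => φ.updsNoPost
  | .upd _ _ pre post _ φ =>
      (∀ e, post e = []) ∧ (∀ e, (pre e).updsNoPost) ∧ φ.updsNoPost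

/-- The formula contains no update modalities (it is a formula of basic epistemic logic). -/
def DForm.noUpd {Agent : Type} : DForm Agent → Prop
  | .atom _ => True
  | .neg φ => φ.noUpd
  | .and φ ψ => φ.noUpd ∧ ψ.noUpd
  | .K _ φ => φ.noUpd
  | .upd _ _ _ _ _ _ => False

/-- All propositional variables occurring in the formula belong to `s`. -/
def DForm.atomsSub {Agent : Type} (s : Set ℕ) : DForm Agent → Prop
  | .atom p => p ∈ s
  | .neg φ => φ.atomsSub s
  | .and φ ψ => φ.atomsSub s ∧ ψ.atomsSub s
  | .K _ φ => φ.atomsSub s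
  | .upd _ _ pre post _ φ =>
      (∀ e, (pre e).atomsSub s) ∧ (∀ e q, q ∈ post e → q.1 ∈ s) ∧ φ.atomsSub s

/-- Event models (with events `Fin (k+1)`, hence finite and nonempty). -/
structure EvtModel (Agent : Type) where
  k : ℕ
  S : Agent → Fin (k+1) → Fin (k+1) → Bool
  pre : Fin (k+1) → DForm Agent
  post : Fin (k+1) → List (ℕ × Bool)

def EvtModel.IsS5 {Agent : Type} (E : EvtModel Agent) : Prop :=
  ∀ a, Equivalence (fun i j => E.S a i j = true)

def EvtModel.NoPost {Agent : Type} (E : EvtModel Agent) : Prop := ∀ e, E.post e = []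

/-- The product update `M ⊗ E` of an epistemic model with an event model. -/
def EpiModel.update {Agent : Type} (M : EpiModel Agent) (E : EvtModel Agent) : EpiModel Agent :=
  updModel M E.k E.S (fun w e => Sat M w (E.pre e)) E.post

/-- The single-pointed update modality `[E, d]φ` as a formula. -/
def updSingle {Agent : Type} (E : EvtModel Agent) (d : Fin (E.k+1)) (φ : DForm Agent) :
    DForm Agent :=
  .upd E.k E.S E.pre E.post (fun e => decide (e = d)) φ

/-- The multi-pointed update modality `[E, E_d]φ` with all events designated. -/
def updAll {Agent : Type} (E : EvtModel Agent) (φ : DForm Agent) : DForm Agent :=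
  .upd E.k E.S E.pre E.post (fun _ => true) φ

/-- The submodel of `M` induced by the set `U` of worlds. -/
def EpiModel.restrict {Agent : Type} (M : EpiModel Agent) (U : M.World → Prop) :
    EpiModel Agent where
  World := {w : M.World // U w}
  rel a u v := M.rel a u.1 v.1
  val u p := M.val u.1 p

/-- `Z` is a bisimulation between the models `M` and `N`. -/
def IsBisim {Agent : Type} (M N : EpiModel Agent) (Z : M.World → N.World → Prop) : Prop :=
  ∀ u u', Z u u' →
    (∀ p, M.val u p ↔ N.val u' p) ∧
    (∀ a v, M.rel a u v → ∃ v', N.rel a u' v' ∧ Z v v') ∧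
    (∀ a v', N.rel a u' v' → ∃ v, M.rel a u v ∧ Z v v')

/-- The pointed models `(M, w)` and `(N, v)` are bisimilar. -/
def Bisimilar {Agent : Type} (M : EpiModel Agent) (w : M.World)
    (N : EpiModel Agent) (v : N.World) : Prop :=
  ∃ Z, IsBisim M N Z ∧ Z w v

/-- Quantifier-free propositional formulas. -/
inductive PropForm : Type
  | atom : ℕ → PropForm
  | neg : PropForm → PropForm
  | and : PropForm → PropForm → PropForm

def PropForm.eval (α : ℕ → Bool) : PropForm → Bool
  | .atom p => α p
  | .neg φ => !(φ.eval α)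
  | .and φ ψ => φ.eval α && ψ.eval α

def PropForm.atomsSub (s : Set ℕ) : PropForm → Prop
  | .atom p => p ∈ s
  | .neg φ => φ.atomsSub s
  | .and φ ψ => φ.atomsSub s ∧ ψ.atomsSub s

/-- `β` is lexicographically larger than `α` w.r.t. the ordering `x_1 ≺ … ≺ x_n`
(variable `x_i` is the propositional variable `i`). -/
def LexGT (n : ℕ) (β α : ℕ → Bool) : Prop :=
  ∃ i, 1 ≤ i ∧ i ≤ n ∧ β i = true ∧ α i = false ∧ ∀ j, 1 ≤ j → j < i → β j = α j

/-- `α` is the lexicographically maximal assignment satisfying `ψ` (w.r.t. `x_1 ≺ … ≺ x_n`). -/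
def IsLexMaxSat (n : ℕ) (ψ : PropForm) (α : ℕ → Bool) : Prop :=
  ψ.eval α = true ∧ ∀ β, ψ.eval β = true → ¬ LexGT n β α

/-- Truth of the partially quantified Boolean formula `Q_i x_i … Q_n x_n. ψ` under an
assignment, where `Q_j = ∃` for odd `j` and `Q_j = ∀` for even `j`; the first argument is
the number of remaining quantifiers (i.e. `n + 1 - i`), the second is the index `i`. -/
def QBFAux (ψ : PropForm) : ℕ → ℕ → (ℕ → Bool) → Prop
  | 0, _, α => ψ.eval α = true
  | m+1, i, α =>
    if i % 2 = 1 then ∃ b, QBFAux ψ m (i+1) (Function.update α i b)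
    else ∀ b, QBFAux ψ m (i+1) (Function.update α i b)

/-- Truth of the quantified Boolean formula `∃x_1 ∀x_2 … Q_n x_n. ψ`. -/
def QBFTrue (n : ℕ) (ψ : PropForm) : Prop := QBFAux ψ n 1 (fun _ => false)

/-- Concrete finite epistemic models, suitable as inputs of algorithms. -/
structure FinModel (Agent : Type) where
  m : ℕ
  rel : Agent → Fin (m+1) → Fin (m+1) → Bool
  val : Fin (m+1) → List ℕ

def FinModel.toEpi {Agent : Type} (M : FinModel Agent) : EpiModel Agent where
  World := Fin (M.m+1)
  rel a u v := M.rel a u v = true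
  val w p := p ∈ M.val w

def FinModel.IsS5 {Agent : Type} (M : FinModel Agent) : Prop :=
  ∀ a, Equivalence (fun u v => M.rel a u v = true)


/-! ### The Δ₂ᵖ-hardness construction (single agent, postconditions).
Variable `z` is the propositional variable `0`; variable `x_i` is `i`. -/

/-- The embedding of propositional formulas into the (dynamic) epistemic language. -/
def PropForm.toDForm {Agent : Type} : PropForm → DForm Agent
  | .atom p => .atom p
  | .neg φ => .neg φ.toDForm
  | .and φ ψ => .and φ.toDForm ψ.toDForm

/-- The initial model of the Δ₂ᵖ-hardness construction: worlds `w₀ = 0` (making exactly `z`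
true) and `w₁ = 1` (making everything false), fully `a`-related. -/
def deltaM : EpiModel Unit where
  World := Fin 2
  rel _ _ _ := True
  val w p := w = 0 ∧ p = 0

def deltaW0 : deltaM.World := (0 : Fin 2)

/-- The event model `(E_i, e_i)`: three mutually related events; designated event `0` with
precondition `z`; event `1` with precondition `¬z` and postcondition `{x_i}`; event `2`
with precondition `¬z` and empty postcondition. -/
def deltaE (i : ℕ) : EvtModel Unit where
  k := 2
  S _ _ _ := true
  pre e := if e = 0 then .atom 0 else .neg (.atom 0)
  post e := if e = 1 then [(i, true)] else []

/-- The event model `(E'_i, e'_i)`: designated event `0` with precondition `z`; event `1`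
with precondition `¬z ∧ K̂_a(x_i ∧ φ)` and postcondition `{x_i}`; event `2` with
precondition `¬z ∧ ¬K̂_a(x_i ∧ φ)` and postcondition `{¬x_i}`. -/
def deltaE' (i : ℕ) (ψ : PropForm) : EvtModel Unit where
  k := 2
  S _ _ _ := true
  pre e :=
    if e = 0 then .atom 0
    else if e = 1 then .and (.neg (.atom 0)) (khat () (.and (.atom i) ψ.toDForm))
    else .and (.neg (.atom 0)) (.neg (khat () (.and (.atom i) ψ.toDForm)))
  post e := if e = 1 then [(i, true)] else if e = 2 then [(i, false)] else []

/-- The formula `χ = [E_1,e_1]…[E_n,e_n][E'_1,e'_1]…[E'_n,e'_n] K̂_a x_n`. -/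
def deltaChi (n : ℕ) (ψ : PropForm) : DForm Unit :=
  ((List.range n).map (fun j => deltaE (j+1))).foldr (fun E acc => updSingle E 0 acc)
    (((List.range n).map (fun j => deltaE' (j+1) ψ)).foldr (fun E acc => updSingle E 0 acc)
      (khat () (.atom n)))

/-- The model `M' = M ⊗ E_1 ⊗ … ⊗ E_n`. -/
def deltaM' (n : ℕ) : EpiModel Unit :=
  (((List.range n).map (fun j => deltaE (j+1))).foldl EpiModel.update deltaM)

/-- The model `M'' = M ⊗ E_1 ⊗ … ⊗ E_n ⊗ E'_1 ⊗ … ⊗ E'_n`. -/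
def deltaM'' (n : ℕ) (ψ : PropForm) : EpiModel Unit :=
  (((List.range n).map (fun j => deltaE' (j+1) ψ)).foldl EpiModel.update (deltaM' n))

/-! ### The single-agent multi-pointed PSPACE-hardness construction.
Variable `x_i` is the propositional variable `i`. -/

/-- The group of worlds corresponding to a truth assignment `α`: a world `none` making
no variable true and, for each `j` with `α x_j = 1`, a world `some j` making exactly `x_j`
true; all worlds mutually `a`-related. -/
def groupModel1 (n : ℕ) (α : ℕ → Bool) : EpiModel Unit where
  World := {o : Option (Fin n) // ∀ j : Fin n, o = some j → α (j.1+1) = true}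
  rel _ _ _ := True
  val w p := ∃ j : Fin n, w.1 = some j ∧ p = j.1 + 1

/-- The designated world of the group of worlds corresponding to `α`. -/
def groupW0 (n : ℕ) (α : ℕ → Bool) : (groupModel1 n α).World :=
  ⟨none, fun _ h => nomatch h⟩

/-- The multi-pointed event model `(E_i, E_i)`: two events, both designated, with
preconditions `⊤` and `¬x_i`, empty postconditions, and only reflexive relations. -/
def qEvt (i : ℕ) : EvtModel Unit where
  k := 1
  S _ e f := decide (e = f)
  pre e := if e = 0 then dtop else .neg (.atom i)
  post _ := []

/-- `χ'`: the result of replacing every variable `x_i` in `ψ` by `K̂_a x_i`. -/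
def propKhat : PropForm → DForm Unit
  | .atom p => khat () (.atom p)
  | .neg φ => .neg (propKhat φ)
  | .and φ ψ => .and (propKhat φ) (propKhat ψ)

/-- `qChiAux ψ' m i` is the formula `⟨E_i,E_i⟩[E_{i+1},E_{i+1}]…ψ'` (`m` operators,
diamond at odd indices, box at even indices). -/
def qChiAux (ψ' : DForm Unit) : ℕ → ℕ → DForm Unit
  | 0, _ => ψ'
  | m+1, i =>
    if i % 2 = 1 then .neg (updAll (qEvt i) (.neg (qChiAux ψ' m (i+1))))
    else updAll (qEvt i) (qChiAux ψ' m (i+1))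

/-- The formula `χ = ⟨E_1,E_1⟩[E_2,E_2]…⟨E_{n-1},E_{n-1}⟩[E_n,E_n]χ'`. -/
def qChi (n : ℕ) (ψ : PropForm) : DForm Unit := qChiAux (propKhat ψ) n 1


/-! ### The two-agent PSPACE-hardness construction.
Agents: `a = 0`, `b = 1` (of type `Fin 2`). Propositional variables: `z_0 = 0`,
`z_1 = 1`, `z_2 = 2`. Variable `x_j` of the QBF corresponds to the z1-chain of length `j`. -/

/-- The underlying worlds of a group of worlds, possibly together with z2-chains:
the central world, the worlds `z1 j k` (position `k` in the z1-chain of length `j+1`,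
which represents the variable `x_{j+1}`), and the worlds `z2 i k` (position `k` in the
z2-chain of length `i+1`). -/
inductive GWBase (n m : ℕ) : Type
  | central : GWBase n m
  | z1 : (j : Fin n) → Fin (j.1+2) → GWBase n m
  | z2 : (i : Fin m) → Fin (i.1+2) → GWBase n m

/-- Membership in the `a`-clique: the central world and the first worlds of z1-chains. -/
def aClique {n m : ℕ} : GWBase n m → Prop
  | .central => True
  | .z1 _ k => k.1 = 0
  | .z2 _ _ => False

/-- Membership in the `b`-clique: the central world and the first worlds of z2-chains. -/
def bClique {n m : ℕ} : GWBase n m → Prop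
  | .central => True
  | .z1 _ _ => False
  | .z2 _ k => k.1 = 0

/-- Chain edges: consecutive positions of a z1-chain are related alternately by
`b`, `a`, `b`, … (starting with `b`), and those of a z2-chain alternately by
`a`, `b`, `a`, … (starting with `a`). -/
def chainEdge {n m : ℕ} (ag : Fin 2) : GWBase n m → GWBase n m → Prop
  | .z1 j k, .z1 j' k' =>
      j.1 = j'.1 ∧ ((k'.1 = k.1 + 1 ∧ ag = (if k.1 % 2 = 0 then 1 else 0)) ∨
        (k.1 = k'.1 + 1 ∧ ag = (if k'.1 % 2 = 0 then 1 else 0)))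
  | .z2 i k, .z2 i' k' =>
      i.1 = i'.1 ∧ ((k'.1 = k.1 + 1 ∧ ag = (if k.1 % 2 = 0 then 0 else 1)) ∨
        (k.1 = k'.1 + 1 ∧ ag = (if k'.1 % 2 = 0 then 0 else 1)))
  | _, _ => False

/-- The accessibility relations on `GWBase n m`. -/
def gwRel {n m : ℕ} (ag : Fin 2) (u v : GWBase n m) : Prop :=
  u = v ∨ (ag = 0 ∧ aClique u ∧ aClique v) ∨ (ag = 1 ∧ bClique u ∧ bClique v) ∨
    chainEdge ag u v

/-- The valuation on `GWBase n m`: the central world makes exactly `z_1` and `z_2` true,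
the first world of a chain makes exactly `z_1` (resp. `z_2`) true, the last world of a
chain makes exactly `z_0` true, and all other worlds make no variable true. -/
def gwVal {n m : ℕ} : GWBase n m → ℕ → Prop
  | .central, p => p = 1 ∨ p = 2
  | .z1 j k, p => (k.1 = 0 ∧ p = 1) ∨ (k.1 = j.1 + 1 ∧ p = 0)
  | .z2 i k, p => (k.1 = 0 ∧ p = 2) ∨ (k.1 = i.1 + 1 ∧ p = 0)

/-- The group of worlds representing the truth assignment `α` to `x_1, …, x_n`
(containing a z1-chain of length `j` exactly when `α x_j = 1`), together with
z2-chains of lengths `1, …, m`. -/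
def groupModel2 (n m : ℕ) (α : ℕ → Bool) : EpiModel (Fin 2) where
  World := {u : GWBase n m // ∀ (j : Fin n) (k : Fin (j.1+2)), u = GWBase.z1 j k → α (j.1+1) = true}
  rel ag u v := gwRel ag u.1 v.1
  val u p := gwVal u.1 p

/-- The central (designated) world of `groupModel2 n m α`. -/
def central2 (n m : ℕ) (α : ℕ → Bool) : (groupModel2 n m α).World :=
  ⟨.central, fun _ _ h => nomatch h⟩

/-- The pair of formulas `(χ^a_j, χ^b_j)`. -/
def chiAB : ℕ → DForm (Fin 2) × DForm (Fin 2)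
  | 0 => (.atom 0, .atom 0)
  | j+1 =>
    (khat 0 (.and (.neg (.atom 1)) (.and (.neg (.atom 2)) (chiAB j).2)),
     khat 1 (.and (.neg (.atom 1)) (.and (.neg (.atom 2)) (chiAB j).1)))

def chiA (j : ℕ) : DForm (Fin 2) := (chiAB j).1
def chiB (j : ℕ) : DForm (Fin 2) := (chiAB j).2

/-- `χ_j = z_1 ∧ ¬z_2 ∧ χ^b_j ∧ ¬χ^b_{j-1}` (for `j ≥ 1`). -/
def chiX (j : ℕ) : DForm (Fin 2) :=
  .and (.atom 1) (.and (.neg (.atom 2)) (.and (chiB j) (.neg (chiB (j-1)))))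

/-- `χ'_j = ¬z_1 ∧ z_2 ∧ χ^a_j ∧ ¬χ^a_{j-1}` (for `j ≥ 1`). -/
def chiX' (j : ℕ) : DForm (Fin 2) :=
  .and (.neg (.atom 1)) (.and (.atom 2) (.and (chiA j) (.neg (chiA (j-1)))))

/-- The event model `(E_i, e_i)` of the two-agent construction: events `f^1_i, …, f^5_i`
are `0, …, 4`; `{0,1,2}` is a `b`-clique; `1 S_a 3` and `2 S_a 4`; preconditions
`⊤, ⊤, ⊤, ¬χ'_i, ¬χ'_i ∧ ¬χ_i`; empty postconditions; designated event `0`. -/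
def twoEvt (i : ℕ) : EvtModel (Fin 2) where
  k := 4
  S ag e f := decide (e = f) ||
    (if ag = 1 then decide (e.1 ≤ 2 ∧ f.1 ≤ 2)
     else decide ((e.1 = 1 ∧ f.1 = 3) ∨ (e.1 = 3 ∧ f.1 = 1) ∨
       (e.1 = 2 ∧ f.1 = 4) ∨ (e.1 = 4 ∧ f.1 = 2)))
  pre e :=
    if e.1 ≤ 2 then dtop
    else if e.1 = 3 then .neg (chiX' i)
    else .and (.neg (chiX' i)) (.neg (chiX i))
  post _ := []

/-- The conjunction `⋀_{1 ≤ j ≤ i} ¬K̂_b χ'_j`. -/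
def negConj (i : ℕ) : DForm (Fin 2) :=
  bigAnd ((List.range i).map (fun t => .neg (khat 1 (chiX' (t+1)))))

/-- The conjunction `⋀_{i < j ≤ n} K̂_b χ'_j`. -/
def posConj (n i : ℕ) : DForm (Fin 2) :=
  bigAnd ((List.range (n-i)).map (fun t => khat 1 (chiX' (i+1+t))))

/-- The formula `z_1 ∧ z_2 ∧ ⋀_{1≤j≤i} ¬K̂_b χ'_j ∧ ⋀_{i<j≤n} K̂_b χ'_j`. -/
def xiBody (n i : ℕ) : DForm (Fin 2) :=
  .and (.atom 1) (.and (.atom 2) (.and (negConj i) (posConj n i)))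

/-- `ψ'`: the result of replacing every variable `x_i` in `ψ` by `K̂_a χ_i`. -/
def propToXi : PropForm → DForm (Fin 2)
  | .atom p => khat 0 (chiX p)
  | .neg φ => .neg (propToXi φ)
  | .and φ ψ => .and (propToXi φ) (propToXi ψ)

/-- `xiAux n ψ' m i` is the formula `ξ_i` (with `m = n + 1 - i` remaining steps). -/
def xiAux (n : ℕ) (ψ' : DForm (Fin 2)) : ℕ → ℕ → DForm (Fin 2)
  | 0, _ => ψ'
  | m+1, i =>
    if i % 2 = 1 then khat 1 (khat 0 (.and (xiBody n i) (xiAux n ψ' m (i+1))))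
    else .K 1 (.K 0 (dimp (xiBody n i) (xiAux n ψ' m (i+1))))

/-- The formula `ξ = [E_1,e_1]…[E_n,e_n]ξ_1`. -/
def xiFull (n : ℕ) (ψ : PropForm) : DForm (Fin 2) :=
  ((List.range n).map (fun j => twoEvt (j+1))).foldr (fun E acc => updSingle E 0 acc)
    (xiAux n (propToXi ψ) n 1)

/-- The initial model of the two-agent construction (z1-chains of lengths `1, …, n` for
the all-true assignment, z2-chains of lengths `1, …, n`). -/
def twoM (n : ℕ) : EpiModel (Fin 2) := groupModel2 n n (fun _ => true)

/-- The model `M' = M ⊗ E_1 ⊗ … ⊗ E_n` of the two-agent construction. -/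
def twoM' (n : ℕ) : EpiModel (Fin 2) :=
  ((List.range n).map (fun j => twoEvt (j+1))).foldl EpiModel.update (twoM n)

/-! ### The semi-private-announcement PSPACE-hardness construction. -/

/-- The semi-private announcement of `φ₁` versus `φ₂` to the agents `c` with `A c = true`:
two events with preconditions `φ₁` (designated, event `0`) and `φ₂`, empty postconditions,
related by `S_c` exactly for the agents `c` not in `A` (plus reflexive loops). -/
def semiPrivate {Agent : Type} [DecidableEq Agent] (φ₁ φ₂ : DForm Agent) (A : Agent → Bool) :
    EvtModel Agent where
  k := 1
  S c e f := decide (e = f) || !(A c)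
  pre e := if e = 0 then φ₁ else φ₂
  post _ := []

/-- The semi-private announcement `(E^1_i, f^1_i)`: `¬χ'_{i+n}` versus `¬χ'_{i+2n}`,
announced to agent `a`. -/
def spE1 (n i : ℕ) : EvtModel (Fin 2) :=
  semiPrivate (.neg (chiX' (i+n))) (.neg (chiX' (i+2*n))) (fun c => decide (c = 0))

/-- The semi-private announcement `(E^2_i, f^3_i)`: `⊤` versus
`(¬K̂_b χ'_{i+n} ∧ z_2) → ¬χ'_i`, announced to agent `b`. -/
def spE2 (n i : ℕ) : EvtModel (Fin 2) :=
  semiPrivate dtop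
    (dimp (.and (.neg (khat 1 (chiX' (i+n)))) (.atom 2)) (.neg (chiX' i)))
    (fun c => decide (c = 1))

/-- The semi-private announcement `(E^3_i, f^5_i)`: `⊤` versus
`((¬K̂_b χ'_{i+2n} ∧ z_2) → ¬χ'_i) ∧ ((¬K̂_a K̂_b χ'_{i+2n} ∧ z_1) → ¬χ_i)`,
announced to agent `b`. -/
def spE3 (n i : ℕ) : EvtModel (Fin 2) :=
  semiPrivate dtop
    (.and (dimp (.and (.neg (khat 1 (chiX' (i+2*n)))) (.atom 2)) (.neg (chiX' i)))
      (dimp (.and (.neg (khat 0 (khat 1 (chiX' (i+2*n))))) (.atom 1)) (.neg (chiX i))))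
    (fun c => decide (c = 1))

/-- The list of event models `E^1_1, E^2_1, E^3_1, …, E^1_n, E^2_n, E^3_n`. -/
def spList (n : ℕ) : List (EvtModel (Fin 2)) :=
  ((List.range n).map (fun j => [spE1 n (j+1), spE2 n (j+1), spE3 n (j+1)])).flatten

/-- `spXiAux n ψ' m i` is the formula `ξ_i` of the semi-private construction. -/
def spXiAux (n : ℕ) (ψ' : DForm (Fin 2)) : ℕ → ℕ → DForm (Fin 2)
  | 0, _ => ψ'
  | m+1, i =>
    if i % 2 = 1 then
      khat 1 (.and (negConj i) (khat 0 (.and (xiBody n i) (spXiAux n ψ' m (i+1)))))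
    else
      .K 1 (dimp (negConj i) (.K 0 (dimp (xiBody n i) (spXiAux n ψ' m (i+1)))))

/-- The formula `ξ = [E^1_1,f^1_1][E^2_1,f^3_1][E^3_1,f^5_1]…[E^3_n,f^5_n]ξ_1` of the
semi-private construction. -/
def spXiFull (n : ℕ) (ψ : PropForm) : DForm (Fin 2) :=
  (spList n).foldr (fun E acc => updSingle E 0 acc) (spXiAux n (propToXi ψ) n 1)

/-- The initial model of the semi-private construction (z1-chains of lengths `1, …, n`
for the all-true assignment, z2-chains of lengths `1, …, 3n`). -/
def spM (n : ℕ) : EpiModel (Fin 2) := groupModel2 n (3*n) (fun _ => true)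

/-- The model `M' = M ⊗ E^1_1 ⊗ E^2_1 ⊗ E^3_1 ⊗ … ⊗ E^3_n`. -/
def spM' (n : ℕ) : EpiModel (Fin 2) :=
  (spList n).foldl EpiModel.update (spM n)


/-! ### Auxiliary machinery for statement 6 -/

lemma postEval_nil' (p : ℕ) : postEval [] p = none := rfl

lemma postEval_single (i : ℕ) (b : Bool) (p : ℕ) :
    postEval [(i, b)] p = if i = p then some b else none := by
  by_cases h : i = p
  · subst h; simp [postEval, List.find?]
  · have hb : (i == p) = false := by simp [h]
    simp [postEval, List.find?, hb, h]

lemma val_update_iff {M : EpiModel Unit} {E : EvtModel Unit}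
    (w : M.World) (e : Fin (E.k+1)) (hh : Sat M w (E.pre e)) (p : ℕ) :
    (M.update E).val ⟨(w, e), hh⟩ p ↔
      (match postEval (E.post e) p with
        | some b => b = true
        | none => M.val w p) := Iff.rfl

lemma val_update_none {M : EpiModel Unit} {E : EvtModel Unit}
    {w : M.World} {e : Fin (E.k+1)} (hh : Sat M w (E.pre e)) {p : ℕ}
    (h : postEval (E.post e) p = none) :
    ((M.update E).val ⟨(w, e), hh⟩ p ↔ M.val w p) := by
  rw [val_update_iff, h]

lemma val_update_some {M : EpiModel Unit} {E : EvtModel Unit}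
    {w : M.World} {e : Fin (E.k+1)} (hh : Sat M w (E.pre e)) {p : ℕ} {b : Bool}
    (h : postEval (E.post e) p = some b) :
    ((M.update E).val ⟨(w, e), hh⟩ p ↔ b = true) := by
  rw [val_update_iff, h]

/-- Truth of embedded propositional formulas is given by the Boolean assignment. -/
lemma satProp {Ag : Type} (M : EpiModel Ag) (v : M.World) (γ : ℕ → Bool)
    (h : ∀ p, M.val v p ↔ γ p = true) :
    ∀ φ : PropForm, (Sat M v φ.toDForm ↔ φ.eval γ = true) := by
  intro φ
  induction φ with
  | atom p => simpa [PropForm.toDForm, Sat, PropForm.eval] using h p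
  | neg φ ih => simp [PropForm.toDForm, Sat, PropForm.eval, ih]
  | and φ χ ih1 ih2 => simp [PropForm.toDForm, Sat, PropForm.eval, ih1, ih2]

lemma evalAgree (s : Set ℕ) (γ δ : ℕ → Bool) (h : ∀ p ∈ s, γ p = δ p) :
    ∀ φ : PropForm, φ.atomsSub s → φ.eval γ = φ.eval δ := by
  intro φ
  induction φ with
  | atom p => intro hp; exact h p hp
  | neg φ ih => intro hp; simp [PropForm.eval, ih hp]
  | and φ χ ih1 ih2 => intro hp; simp [PropForm.eval, ih1 hp.1, ih2 hp.2]

lemma sat_khat_full {M : EpiModel Unit} (hfull : ∀ u v, M.rel () u v)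
    (w : M.World) (φ : DForm Unit) :
    Sat M w (khat () φ) ↔ ∃ v, Sat M v φ := by
  simp only [khat, Sat]
  constructor
  · intro h
    by_contra hn
    push_neg at hn
    exact h (fun v _ hv => hn v hv)
  · rintro ⟨v, hv⟩ hall
    exact hall v (hfull w v) hv

/-- Assignments that are false outside `x_1, …, x_n`. -/
def ZeroOut (n : ℕ) (γ : ℕ → Bool) : Prop := ∀ p, p = 0 ∨ n < p → γ p = false

/-- Agreement on `x_1, …, x_k`. -/
def Agrees (k : ℕ) (γ α : ℕ → Bool) : Prop := ∀ i, 1 ≤ i → i ≤ k → γ i = α i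

structure Inv1 (M : EpiModel Unit) : Prop where
  exz : ∃ w, M.val w 0
  zonly : ∀ w, M.val w 0 → ∀ p, p ≠ 0 → ¬ M.val w p

structure Inv2 (n k : ℕ) (α : ℕ → Bool) (M : EpiModel Unit) : Prop where
  full : ∀ u v, M.rel () u v
  zonly : ∀ w, M.val w 0 → ∀ p, p ≠ 0 → ¬ M.val w p
  realVal : ∀ v, ¬ M.val v 0 →
    ∃ γ, ZeroOut n γ ∧ Agrees k γ α ∧ ∀ p, M.val v p ↔ γ p = true
  realAll : ∀ γ, ZeroOut n γ → Agrees k γ α →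
    ∃ v, ¬ M.val v 0 ∧ ∀ p, M.val v p ↔ γ p = true

/-- Event models that preserve `Inv1`. -/
def GoodE (E : EvtModel Unit) : Prop :=
  E.pre 0 = .atom 0 ∧ E.post 0 = [] ∧ (∀ e, postEval (E.post e) 0 = none) ∧
    (∀ e : Fin (E.k+1), e ≠ 0 → ∀ (M : EpiModel Unit) (w : M.World),
      Sat M w (E.pre e) → ¬ M.val w 0)

lemma inv1_update (M : EpiModel Unit) (E : EvtModel Unit) (hE : GoodE E)
    (h : Inv1 M) : Inv1 (M.update E) := by
  obtain ⟨hpre0, hpost0, hp0, hne⟩ := hE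
  constructor
  · obtain ⟨w, hw⟩ := h.exz
    have hs : Sat M w (E.pre 0) := by rw [hpre0]; exact hw
    exact ⟨⟨(w, 0), hs⟩, (val_update_none hs (hp0 0)).mpr hw⟩
  · rintro ⟨⟨w, e⟩, hh⟩ hz p hp hvp
    have hw0 : M.val w 0 := (val_update_none hh (hp0 e)).mp hz
    by_cases h0 : e = 0
    · subst h0
      have hnil : postEval (E.post 0) p = none := by rw [hpost0]; rfl
      exact h.zonly w hw0 p hp ((val_update_none hh hnil).mp hvp)
    · exact hne e h0 M w hh hw0

lemma inv1_foldl (L : List (EvtModel Unit)) (hL : ∀ E ∈ L, GoodE E) :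
    ∀ M : EpiModel Unit, Inv1 M → Inv1 (L.foldl EpiModel.update M) := by
  induction L with
  | nil => intro M h; exact h
  | cons E L ih =>
      intro M h
      exact ih (fun E' hE' => hL E' (List.mem_cons_of_mem _ hE')) _
        (inv1_update M E (hL E List.mem_cons_self) h)

lemma goodE_deltaE (i : ℕ) (hi : i ≠ 0) : GoodE (deltaE i) := by
  refine ⟨rfl, rfl, ?_, ?_⟩
  · intro e
    by_cases he : e = (1 : Fin 3)
    · subst he
      show postEval [(i, true)] 0 = none
      rw [postEval_single]
      simp [hi]
    · show postEval (if e = 1 then [(i, true)] else []) 0 = none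
      rw [if_neg (show ¬ e = 1 from he)]
      rfl
  · intro e he M w hs
    have hp : (deltaE i).pre e = .neg (.atom 0) := by
      show (if e = 0 then _ else _) = _
      rw [if_neg he]
    rw [hp] at hs
    exact hs

lemma goodE_deltaE' (i : ℕ) (ψ : PropForm) (hi : i ≠ 0) : GoodE (deltaE' i ψ) := by
  refine ⟨rfl, rfl, ?_, ?_⟩
  · intro e
    by_cases h1 : e = (1 : Fin 3)
    · subst h1
      show postEval [(i, true)] 0 = none
      rw [postEval_single]; simp [hi]
    by_cases h2 : e = (2 : Fin 3)
    · subst h2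
      have hpost : (deltaE' i ψ).post 2 = [(i, false)] := by
        show (if (2 : Fin 3) = 1 then [(i, true)] else if (2 : Fin 3) = 2 then [(i, false)] else []) = [(i, false)]
        rw [if_neg (by decide), if_pos rfl]
      show postEval ((deltaE' i ψ).post 2) 0 = none
      rw [hpost, postEval_single]; simp [hi]
    · show postEval (if e = 1 then _ else if e = 2 then _ else []) 0 = none
      rw [if_neg (show ¬ e = 1 from h1), if_neg (show ¬ e = 2 from h2)]
      rfl
  · intro e he M w hs
    by_cases h1 : e = (1 : Fin 3)
    · subst h1
      have : Sat M w (.and (.neg (.atom 0)) (khat () (.and (.atom i) ψ.toDForm))) := hs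
      exact this.1
    · have : Sat M w (.and (.neg (.atom 0)) (.neg (khat () (.and (.atom i) ψ.toDForm)))) := by
        have hp : (deltaE' i ψ).pre e = .and (.neg (.atom 0)) (.neg (khat () (.and (.atom i) ψ.toDForm))) := by
          show (if e = 0 then _ else if e = 1 then _ else _) = _
          rw [if_neg he, if_neg (show ¬ e = 1 from h1)]
        rw [hp] at hs; exact hs
      exact this.1

lemma fin3 : ∀ e : Fin 3, e = 0 ∨ e = 1 ∨ e = 2 := by decide

lemma deltaM'_succ (n : ℕ) :
    deltaM' (n+1) = (deltaM' n).update (deltaE (n+1)) := by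
  unfold deltaM'
  rw [List.range_succ, List.map_append, List.foldl_append]
  rfl

lemma inv2_deltaM' (n : ℕ) (α : ℕ → Bool) : Inv2 n 0 α (deltaM' n) := by
  induction n with
  | zero =>
      have h0 : deltaM' 0 = deltaM := rfl
      rw [h0]
      refine ⟨fun u v => trivial, ?_, ?_, ?_⟩
      · rintro w hw p hp hvp; exact hp hvp.2
      · intro v hv
        refine ⟨fun _ => false, fun _ _ => rfl, fun i h1 h2 => absurd h2 (by omega),
          fun p => ?_⟩
        constructor
        · rintro ⟨h1, h2⟩; exact absurd ⟨h1, rfl⟩ hv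
        · intro h; exact absurd h (by simp)
      · intro γ hz _
        refine ⟨(1 : Fin 2), ?_, fun p => ?_⟩
        · rintro ⟨h, -⟩; exact absurd h (by decide)
        · rw [hz p (by omega)]
          constructor
          · rintro ⟨h, -⟩; exact absurd h (by decide)
          · intro h; exact absurd h (by simp)
  | succ n ih =>
      rw [deltaM'_succ]
      set M := deltaM' n with hM
      set E := deltaE (n+1) with hE
      have hpre0 : E.pre 0 = .atom 0 := rfl
      have hpreN : ∀ e : Fin 3, e ≠ 0 → E.pre e = .neg (.atom 0) := by
        intro e he
        show (if e = 0 then DForm.atom 0 else .neg (.atom 0)) = .neg (.atom 0)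
        rw [if_neg he]
      have hpost1 : E.post 1 = [(n+1, true)] := rfl
      have hpostne : ∀ e : Fin 3, e ≠ 1 → E.post e = [] := by
        intro e he
        show (if e = 1 then [(n+1, true)] else []) = []
        rw [if_neg he]
      have hpe0 : ∀ e : Fin 3, postEval (E.post e) 0 = none := by
        intro e
        by_cases he : e = 1
        · subst he; erw [hpost1, postEval_single]; simp
        · rw [hpostne e he]; rfl
      refine ⟨?_, ?_, ?_, ?_⟩
      · rintro u v; exact ⟨ih.full _ _, rfl⟩
      · rintro ⟨⟨w, e⟩, hh⟩ hz p hp hvp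
        have hh' : Sat M w (E.pre e) := hh
        have hw0 : M.val w 0 := (val_update_none hh (hpe0 e)).mp hz
        by_cases h0 : e = 0
        · subst h0
          have hnil : postEval (E.post 0) p = none := by
            erw [hpostne 0 (by decide)]; rfl
          exact ih.zonly w hw0 p hp ((val_update_none hh hnil).mp hvp)
        · rw [hpreN e h0] at hh'
          exact hh' hw0
      · rintro ⟨⟨w, e⟩, hh⟩ hz
        have hh' : Sat M w (E.pre e) := hh
        have hwz : ¬ M.val w 0 := fun h => hz ((val_update_none hh (hpe0 e)).mpr h)
        rcases fin3 e with rfl | rfl | rfl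
        · erw [hpre0] at hh'
          exact absurd (show M.val w 0 from hh') hwz
        · obtain ⟨γ, hzo, -, hval⟩ := ih.realVal w hwz
          refine ⟨Function.update γ (n+1) true, ?_,
            fun i h1 h2 => absurd h2 (by omega), fun p => ?_⟩
          · intro p hp
            have hne : p ≠ n+1 := by omega
            rw [Function.update_of_ne hne]
            exact hzo p (by omega)
          · by_cases hp : p = n+1
            · subst hp
              rw [val_update_some hh (by erw [hpost1, postEval_single, if_pos rfl])]
              rw [Function.update_self]
            · rw [val_update_none hh
                (by erw [hpost1, postEval_single, if_neg (fun hc => hp hc.symm)])]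
              rw [Function.update_of_ne hp]
              exact hval p
        · obtain ⟨γ, hzo, -, hval⟩ := ih.realVal w hwz
          refine ⟨γ, ?_, fun i h1 h2 => absurd h2 (by omega), fun p => ?_⟩
          · intro p hp; exact hzo p (by omega)
          · rw [val_update_none hh (by rw [hpostne 2 (by decide)]; rfl)]
            exact hval p
      · intro γ hzo _
        set γ₀ := Function.update γ (n+1) false with hγ₀
        have hzo₀ : ZeroOut n γ₀ := by
          intro p hp
          by_cases hpn : p = n+1
          · subst hpn; rw [hγ₀, Function.update_self]
          · rw [hγ₀, Function.update_of_ne hpn]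
            exact hzo p (by omega)
        obtain ⟨v, hvz, hval⟩ := ih.realAll γ₀ hzo₀ (fun i h1 h2 => absurd h2 (by omega))
        by_cases hb : γ (n+1) = true
        · have hh : Sat M v (E.pre 1) := by
            erw [hpreN 1 (by decide)]
            exact hvz
          refine ⟨⟨(v, 1), hh⟩, ?_, fun p => ?_⟩
          · intro h0
            exact hvz ((val_update_none hh (hpe0 1)).mp h0)
          · by_cases hp : p = n+1
            · subst hp
              rw [val_update_some hh (by rw [hpost1, postEval_single, if_pos rfl])]
              rw [hb]
            · rw [val_update_none hh
                (by rw [hpost1, postEval_single, if_neg (fun hc => hp hc.symm)])]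
              rw [hval p, hγ₀, Function.update_of_ne hp]
        · have hbf : γ (n+1) = false := by revert hb; cases γ (n+1) <;> simp
          have hh : Sat M v (E.pre 2) := by
            erw [hpreN 2 (by decide)]
            exact hvz
          refine ⟨⟨(v, 2), hh⟩, ?_, fun p => ?_⟩
          · intro h0
            exact hvz ((val_update_none hh (hpe0 2)).mp h0)
          · rw [val_update_none hh (by erw [hpostne 2 (by decide)]; rfl), hval p]
            by_cases hp : p = n+1
            · subst hp
              rw [hγ₀, Function.update_self, hbf]
            · rw [hγ₀, Function.update_of_ne hp]

/-- Truncation of an assignment to `x_1, …, x_n`. -/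
def truncA (n : ℕ) (α : ℕ → Bool) : ℕ → Bool := fun p => if 1 ≤ p ∧ p ≤ n then α p else false

lemma truncA_pos {n p : ℕ} (α : ℕ → Bool) (h1 : 1 ≤ p) (h2 : p ≤ n) :
    truncA n α p = α p := if_pos ⟨h1, h2⟩

lemma truncA_neg {n p : ℕ} (α : ℕ → Bool) (h : ¬ (1 ≤ p ∧ p ≤ n)) :
    truncA n α p = false := if_neg h

/-- The intermediate stages of `deltaM''`. -/
def stageM (n : ℕ) (ψ : PropForm) (k : ℕ) : EpiModel Unit :=
  ((List.range k).map (fun j => deltaE' (j+1) ψ)).foldl EpiModel.update (deltaM' n)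

lemma stageM_succ (n : ℕ) (ψ : PropForm) (k : ℕ) :
    stageM n ψ (k+1) = (stageM n ψ k).update (deltaE' (k+1) ψ) := by
  unfold stageM
  rw [List.range_succ, List.map_append, List.foldl_append]
  rfl

lemma inv2_stage (n : ℕ) (ψ : PropForm) (hvars : ψ.atomsSub (Set.Icc 1 n))
    (α : ℕ → Bool) (hα : IsLexMaxSat n ψ α) :
    ∀ k, k ≤ n → Inv2 n k α (stageM n ψ k) := by
  intro k
  induction k with
  | zero => intro _; exact inv2_deltaM' n α
  | succ k ih =>
    intro hk1
    have I := ih (by omega)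
    rw [stageM_succ]
    set M := stageM n ψ k with hM
    set E := deltaE' (k+1) ψ with hE
    have hpre0 : E.pre 0 = .atom 0 := rfl
    have hpre1 : E.pre 1 = .and (.neg (.atom 0))
        (khat () (.and (.atom (k+1)) ψ.toDForm)) := rfl
    have hpre2 : E.pre 2 = .and (.neg (.atom 0))
        (.neg (khat () (.and (.atom (k+1)) ψ.toDForm))) := rfl
    have hpost0 : E.post 0 = [] := rfl
    have hpost1 : E.post 1 = [(k+1, true)] := rfl
    have hpost2 : E.post 2 = [(k+1, false)] := rfl
    have hpe0 : ∀ e : Fin 3, postEval (E.post e) 0 = none := by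
      intro e
      rcases fin3 e with rfl | rfl | rfl
      · erw [hpost0]; rfl
      · erw [hpost1, postEval_single]; simp
      · erw [hpost2, postEval_single]; simp
    -- the key equivalence
    have keyB : (∃ v : M.World, M.val v (k+1) ∧ Sat M v ψ.toDForm) ↔ α (k+1) = true := by
      constructor
      · rintro ⟨v, hv1, hv2⟩
        have hvz : ¬ M.val v 0 := fun h0 => I.zonly v h0 (k+1) (by omega) hv1
        obtain ⟨γ, hzo, hag, hval⟩ := I.realVal v hvz
        have hγ1 : γ (k+1) = true := (hval (k+1)).mp hv1
        have hev : ψ.eval γ = true := (satProp M v γ hval ψ).mp hv2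
        by_contra hne
        have hαf : α (k+1) = false := by revert hne; cases α (k+1) <;> simp
        exact hα.2 γ hev ⟨k+1, by omega, by omega, hγ1, hαf,
          fun j hj1 hj2 => hag j hj1 (by omega)⟩
      · intro hαt
        have hzo : ZeroOut n (truncA n α) := fun p hp => truncA_neg α (by omega)
        have hag : Agrees k (truncA n α) α := fun i h1 h2 => truncA_pos α h1 (by omega)
        obtain ⟨v, hvz, hval⟩ := I.realAll _ hzo hag
        refine ⟨v, ?_, ?_⟩
        · rw [hval (k+1), truncA_pos α (by omega) (by omega)]
          exact hαt
        · rw [satProp M v _ hval ψ,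
            evalAgree (Set.Icc 1 n) _ α (fun p hp => truncA_pos α hp.1 hp.2) ψ hvars]
          exact hα.1
    have hkh : ∀ w : M.World,
        Sat M w (khat () (.and (.atom (k+1)) ψ.toDForm)) ↔ α (k+1) = true := by
      intro w
      rw [sat_khat_full I.full, ← keyB]
      constructor
      · rintro ⟨v, hv⟩
        exact ⟨v, (show M.val v (k+1) ∧ Sat M v ψ.toDForm from hv)⟩
      · rintro ⟨v, h1, h2⟩
        exact ⟨v, show Sat M v (.and (.atom (k+1)) ψ.toDForm) from ⟨h1, h2⟩⟩
    refine ⟨?_, ?_, ?_, ?_⟩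
    · rintro u v; exact ⟨I.full _ _, rfl⟩
    · rintro ⟨⟨w, e⟩, hh⟩ hz p hp hvp
      have hh' : Sat M w (E.pre e) := hh
      have hw0 : M.val w 0 := (val_update_none hh (hpe0 e)).mp hz
      rcases fin3 e with rfl | rfl | rfl
      · have hnil : postEval (E.post 0) p = none := by rw [hpost0]; rfl
        exact I.zonly w hw0 p hp ((val_update_none hh hnil).mp hvp)
      · erw [hpre1] at hh'
        exact hh'.1 hw0
      · erw [hpre2] at hh'
        exact hh'.1 hw0
    · rintro ⟨⟨w, e⟩, hh⟩ hz
      have hh' : Sat M w (E.pre e) := hh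
      have hwz : ¬ M.val w 0 := fun h => hz ((val_update_none hh (hpe0 e)).mpr h)
      rcases fin3 e with rfl | rfl | rfl
      · erw [hpre0] at hh'
        exact absurd (show M.val w 0 from hh') hwz
      · erw [hpre1] at hh'
        have hB : α (k+1) = true := (hkh w).mp hh'.2
        obtain ⟨γ, hzo, hag, hval⟩ := I.realVal w hwz
        refine ⟨Function.update γ (k+1) true, ?_, ?_, fun p => ?_⟩
        · intro p hp
          have hne : p ≠ k+1 := by omega
          rw [Function.update_of_ne hne]
          exact hzo p hp
        · intro i h1 h2
          by_cases hik : i = k+1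
          · subst hik; rw [Function.update_self, hB]
          · rw [Function.update_of_ne hik]
            exact hag i h1 (by omega)
        · by_cases hp : p = k+1
          · subst hp
            rw [val_update_some hh (by erw [hpost1, postEval_single, if_pos rfl])]
            rw [Function.update_self]
          · rw [val_update_none hh
              (by erw [hpost1, postEval_single, if_neg (fun hc => hp hc.symm)])]
            rw [Function.update_of_ne hp]
            exact hval p
      · erw [hpre2] at hh'
        have hB : ¬ α (k+1) = true := fun hb => hh'.2 ((hkh w).mpr hb)
        have hBf : α (k+1) = false := by revert hB; cases α (k+1) <;> simp
        obtain ⟨γ, hzo, hag, hval⟩ := I.realVal w hwz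
        refine ⟨Function.update γ (k+1) false, ?_, ?_, fun p => ?_⟩
        · intro p hp
          by_cases hne : p = k+1
          · subst hne; rw [Function.update_self]
          · rw [Function.update_of_ne hne]
            exact hzo p hp
        · intro i h1 h2
          by_cases hik : i = k+1
          · subst hik; rw [Function.update_self, hBf]
          · rw [Function.update_of_ne hik]
            exact hag i h1 (by omega)
        · by_cases hp : p = k+1
          · subst hp
            rw [val_update_some hh (by erw [hpost2, postEval_single, if_pos rfl])]
            rw [Function.update_self]
          · rw [val_update_none hh
              (by erw [hpost2, postEval_single, if_neg (fun hc => hp hc.symm)])]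
            rw [Function.update_of_ne hp]
            exact hval p
    · intro γ hzo hag
      set γ₀ := Function.update γ (k+1) false with hγ₀
      have hzo₀ : ZeroOut n γ₀ := by
        intro p hp
        by_cases hpk : p = k+1
        · subst hpk; rw [hγ₀, Function.update_self]
        · rw [hγ₀, Function.update_of_ne hpk]
          exact hzo p hp
      have hag₀ : Agrees k γ₀ α := by
        intro i h1 h2
        rw [hγ₀, Function.update_of_ne (by omega : i ≠ k+1)]
        exact hag i h1 (by omega)
      obtain ⟨v, hvz, hval⟩ := I.realAll γ₀ hzo₀ hag₀
      have hγk : γ (k+1) = α (k+1) := hag (k+1) (by omega) le_rfl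
      by_cases hb : α (k+1) = true
      · have hh : Sat M v (E.pre 1) := by
          rw [hpre1]
          exact ⟨hvz, (hkh v).mpr hb⟩
        refine ⟨⟨(v, 1), hh⟩, ?_, fun p => ?_⟩
        · intro h0
          exact hvz ((val_update_none hh (hpe0 1)).mp h0)
        · by_cases hp : p = k+1
          · subst hp
            rw [val_update_some hh (by rw [hpost1, postEval_single, if_pos rfl])]
            rw [hγk, hb]
          · rw [val_update_none hh
              (by rw [hpost1, postEval_single, if_neg (fun hc => hp hc.symm)])]
            rw [hval p, hγ₀, Function.update_of_ne hp]
      · have hbf : α (k+1) = false := by revert hb; cases α (k+1) <;> simp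
        have hh : Sat M v (E.pre 2) := by
          rw [hpre2]
          exact ⟨hvz, fun hc => hb ((hkh v).mp hc)⟩
        refine ⟨⟨(v, 2), hh⟩, ?_, fun p => ?_⟩
        · intro h0
          exact hvz ((val_update_none hh (hpe0 2)).mp h0)
        · by_cases hp : p = k+1
          · subst hp
            rw [val_update_some hh (by rw [hpost2, postEval_single, if_pos rfl])]
            rw [hγk, hbf]
          · rw [val_update_none hh
              (by rw [hpost2, postEval_single, if_neg (fun hc => hp hc.symm)])]
            rw [hval p, hγ₀, Function.update_of_ne hp]


/-- In the Δ₂ᵖ-hardness construction, with `ψ` a satisfiable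
propositional formula over `x_1, …, x_n` and
`M'' = M ⊗ E_1 ⊗ … ⊗ E_n ⊗ E'_1 ⊗ … ⊗ E'_n`: the designated world (any world making `z`
true) makes all of `x_1, …, x_n` false, and every world making `z` false agrees on
`x_1, …, x_n` with the lexicographically maximal assignment satisfying `ψ`. -/
theorem statement6 (n : ℕ) (hn : 1 ≤ n) (ψ : PropForm)
    (hvars : ψ.atomsSub (Set.Icc 1 n)) (hsat : ∃ α, ψ.eval α = true) :
    (∃ w : (deltaM'' n ψ).World, (deltaM'' n ψ).val w 0) ∧
    (∀ w : (deltaM'' n ψ).World, (deltaM'' n ψ).val w 0 →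
      ∀ i, 1 ≤ i → i ≤ n → ¬ (deltaM'' n ψ).val w i) ∧
    (∀ v : (deltaM'' n ψ).World, ¬ (deltaM'' n ψ).val v 0 →
      ∀ α, IsLexMaxSat n ψ α → ∀ i, 1 ≤ i → i ≤ n →
        ((deltaM'' n ψ).val v i ↔ α i = true)) := by
  have hL1 : ∀ E ∈ (List.range n).map (fun j => deltaE (j+1)), GoodE E := by
    intro E hE
    simp only [List.mem_map] at hE
    obtain ⟨j, -, rfl⟩ := hE
    exact goodE_deltaE (j+1) (by omega)
  have hL2 : ∀ E ∈ (List.range n).map (fun j => deltaE' (j+1) ψ), GoodE E := by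
    intro E hE
    simp only [List.mem_map] at hE
    obtain ⟨j, -, rfl⟩ := hE
    exact goodE_deltaE' (j+1) ψ (by omega)
  have hbase : Inv1 deltaM := by
    constructor
    · exact ⟨(0 : Fin 2), rfl, rfl⟩
    · rintro w hw p hp hvp
      exact hp hvp.2
  have h1 : Inv1 (deltaM'' n ψ) :=
    inv1_foldl _ hL2 _ (inv1_foldl _ hL1 _ hbase)
  refine ⟨h1.exz, ?_, ?_⟩
  · intro w hw i h1i _
    exact h1.zonly w hw i (by omega)
  · intro v hv α hα i h1i hin
    have I : Inv2 n n α (deltaM'' n ψ) := inv2_stage n ψ hvars α hα n le_rfl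
    obtain ⟨γ, hzo, hag, hval⟩ := I.realVal v hv
    rw [hval i, hag i h1i hin]

end DELMC
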